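/- Unbiasedness of the sample variance under complete randomization: for every treatment j with N_j ≥ 2, defining the sample variance s_j² = (1/(N_j−1)) Σ_{i : T(i)=j} (Y_i(j) − p_j)², one has E[s_j²] = S_j². -/
import Mathlib


open Finset

/-- The finset of completely randomized assignments of `N` units to treatments in `J`
with group sizes `Nj`. -/
def assignments (N : ℕ) {J : Type*} [Fintype J] [DecidableEq J] (Nj : J → ℕ) :
    Finset (Fin N → J) :=
  Finset.univ.filter fun T => ∀ j, (Finset.univ.filter fun i => T i = j).card = Nj j

/-- Expectation with respect to the uniform distribution on completely randomized
assignments. -/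
noncomputable def expect {N : ℕ} {J : Type*} [Fintype J] [DecidableEq J]
    (Nj : J → ℕ) (f : (Fin N → J) → ℝ) : ℝ :=
  (∑ T ∈ assignments N Nj, f T) / ((assignments N Nj).card : ℝ)

/-- Variance with respect to the randomization distribution. -/
noncomputable def rvar {N : ℕ} {J : Type*} [Fintype J] [DecidableEq J]
    (Nj : J → ℕ) (f : (Fin N → J) → ℝ) : ℝ :=
  expect Nj fun T => (f T - expect Nj f) ^ 2

/-- Covariance with respect to the randomization distribution. -/
noncomputable def rcov {N : ℕ} {J : Type*} [Fintype J] [DecidableEq J]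
    (Nj : J → ℕ) (f g : (Fin N → J) → ℝ) : ℝ :=
  expect Nj fun T => (f T - expect Nj f) * (g T - expect Nj g)

/-- Observed group mean `p_j` of treatment `j` under assignment `T`. -/
noncomputable def pObs {N : ℕ} {J : Type*} [DecidableEq J]
    (Y : Fin N → J → ℝ) (Nj : J → ℕ) (j : J) (T : Fin N → J) : ℝ :=
  (∑ i ∈ Finset.univ.filter fun i => T i = j, Y i j) / (Nj j : ℝ)

/-- Population mean `P_j`. -/
noncomputable def Pmean {N : ℕ} {J : Type*} (Y : Fin N → J → ℝ) (j : J) : ℝ :=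
  (∑ i, Y i j) / (N : ℝ)

/-- Population variance `S_j²`. -/
noncomputable def S2 {N : ℕ} {J : Type*} (Y : Fin N → J → ℝ) (j : J) : ℝ :=
  (∑ i, (Y i j - Pmean Y j) ^ 2) / ((N : ℝ) - 1)

/-- Variance of unit-level differences `S²_{j-j'}`. -/
noncomputable def S2diff {N : ℕ} {J : Type*} (Y : Fin N → J → ℝ) (j j' : J) : ℝ :=
  (∑ i, (Y i j - Y i j' - (Pmean Y j - Pmean Y j')) ^ 2) / ((N : ℝ) - 1)

/-- Sample variance `s_j²` of the observed outcomes in treatment group `j`. -/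
noncomputable def s2obs {N : ℕ} {J : Type*} [DecidableEq J]
    (Y : Fin N → J → ℝ) (Nj : J → ℕ) (j : J) (T : Fin N → J) : ℝ :=
  (∑ i ∈ Finset.univ.filter fun i => T i = j, (Y i j - pObs Y Nj j T) ^ 2) /
    ((Nj j : ℝ) - 1)


section Aux

variable {N : ℕ} {J : Type*} [Fintype J] [DecidableEq J] (Nj : J → ℕ)

lemma mem_assignments {T : Fin N → J} :
    T ∈ assignments N Nj ↔ ∀ j, (Finset.univ.filter fun i => T i = j).card = Nj j := by
  simp [assignments]

lemma comp_mem_assignments {T : Fin N → J} (hT : T ∈ assignments N Nj)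
    (σ : Equiv.Perm (Fin N)) : (T ∘ σ) ∈ assignments N Nj := by
  rw [mem_assignments] at hT ⊢
  intro j
  rw [← hT j]
  apply Finset.card_bij' (fun i _ => σ i) (fun i _ => σ.symm i) <;>
    simp [Function.comp]

lemma assignments_nonempty (hsum : ∑ j, Nj j = N) : (assignments N Nj).Nonempty := by
  have hcard : Fintype.card (Σ j : J, Fin (Nj j)) = Fintype.card (Fin N) := by
    simp [hsum]
  obtain e := Fintype.equivOfCardEq hcard
  refine ⟨fun i => (e.symm i).1, ?_⟩
  rw [mem_assignments]
  intro j
  have himg : (Finset.univ.filter fun i => (e.symm i).1 = j)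
      = Finset.univ.image fun b : Fin (Nj j) => e ⟨j, b⟩ := by
    ext i
    simp only [Finset.mem_filter, Finset.mem_univ, true_and, Finset.mem_image]
    constructor
    · intro h
      subst h
      exact ⟨(e.symm i).2, by rw [Sigma.eta, Equiv.apply_symm_apply]⟩
    · rintro ⟨b, rfl⟩
      simp
  rw [himg, Finset.card_image_of_injective _ ?_]
  · simp
  · intro b b' hbb
    have := e.injective hbb
    simpa using this

lemma nat_sq_sub (n : ℕ) : n * n - n = n * (n - 1) := by
  rcases n with _ | m
  · simp
  · rw [Nat.succ_sub_one, Nat.mul_succ, Nat.add_sub_cancel]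

lemma card_filter_apply_eq (j : J) (i k : Fin N) :
    ((assignments N Nj).filter fun T => T i = j).card
      = ((assignments N Nj).filter fun T => T k = j).card := by
  apply Finset.card_bij' (fun T _ => T ∘ Equiv.swap i k) (fun T _ => T ∘ Equiv.swap i k)
  · intro T hT
    simp only [Finset.mem_filter] at hT ⊢
    exact ⟨comp_mem_assignments Nj hT.1 _,
      by simpa [Function.comp, Equiv.swap_apply_right] using hT.2⟩
  · intro T hT
    simp only [Finset.mem_filter] at hT ⊢
    exact ⟨comp_mem_assignments Nj hT.1 _,
      by simpa [Function.comp, Equiv.swap_apply_left] using hT.2⟩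
  · intro T hT
    funext x
    simp [Function.comp, Equiv.swap_apply_self]
  · intro T hT
    funext x
    simp [Function.comp, Equiv.swap_apply_self]

lemma card_filter_apply_mul (j : J) (i : Fin N) :
    ((assignments N Nj).filter fun T => T i = j).card * N
      = Nj j * (assignments N Nj).card := by
  calc ((assignments N Nj).filter fun T => T i = j).card * N
      = ∑ k : Fin N, ((assignments N Nj).filter fun T => T k = j).card := by
        rw [Finset.sum_congr rfl fun k _ => card_filter_apply_eq Nj j k i]
        simp [mul_comm]
    _ = ∑ k : Fin N, ∑ T ∈ assignments N Nj, if T k = j then 1 else 0 :=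
        Finset.sum_congr rfl fun _ _ => Finset.card_filter _ _
    _ = ∑ T ∈ assignments N Nj, ∑ k : Fin N, if T k = j then 1 else 0 :=
        Finset.sum_comm
    _ = ∑ T ∈ assignments N Nj, Nj j := by
        refine Finset.sum_congr rfl fun T hT => ?_
        rw [← Finset.card_filter]
        exact (mem_assignments Nj).1 hT j
    _ = Nj j * (assignments N Nj).card := by simp [mul_comm]

lemma exists_perm_pair {i i' k k' : Fin N} (h : i ≠ i') (h2 : k ≠ k') :
    ∃ σ : Equiv.Perm (Fin N), σ k = i ∧ σ k' = i' := by
  refine ⟨(Equiv.swap (Equiv.swap k i k') i') * (Equiv.swap k i), ?_, ?_⟩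
  · simp only [Equiv.Perm.mul_apply, Equiv.swap_apply_left]
    apply Equiv.swap_apply_of_ne_of_ne
    · intro hc
      apply h2
      apply (Equiv.swap k i).injective
      rw [Equiv.swap_apply_left, ← hc]
    · exact h
  · simp only [Equiv.Perm.mul_apply, Equiv.swap_apply_left]

lemma card_filter_pair_eq (j : J) {i i' k k' : Fin N} (h : i ≠ i') (h2 : k ≠ k') :
    ((assignments N Nj).filter fun T => T i = j ∧ T i' = j).card
      = ((assignments N Nj).filter fun T => T k = j ∧ T k' = j).card := by
  obtain ⟨σ, hk, hk'⟩ := exists_perm_pair h h2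
  apply Finset.card_bij' (fun T _ => T ∘ σ) (fun T _ => T ∘ σ.symm)
  · intro T hT
    simp only [Finset.mem_filter] at hT ⊢
    refine ⟨comp_mem_assignments Nj hT.1 _, ?_, ?_⟩
    · simpa [Function.comp, hk] using hT.2.1
    · simpa [Function.comp, hk'] using hT.2.2
  · intro T hT
    simp only [Finset.mem_filter] at hT ⊢
    refine ⟨comp_mem_assignments Nj hT.1 _, ?_, ?_⟩
    · have : σ.symm i = k := by rw [← hk, Equiv.symm_apply_apply]
      simpa [Function.comp, this] using hT.2.1
    · have : σ.symm i' = k' := by rw [← hk', Equiv.symm_apply_apply]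
      simpa [Function.comp, this] using hT.2.2
  · intro T hT
    funext x
    simp [Function.comp]
  · intro T hT
    funext x
    simp [Function.comp]

lemma card_filter_pair_mul (j : J) {i i' : Fin N} (h : i ≠ i') :
    ((assignments N Nj).filter fun T => T i = j ∧ T i' = j).card * (N * (N - 1))
      = Nj j * (Nj j - 1) * (assignments N Nj).card := by
  calc ((assignments N Nj).filter fun T => T i = j ∧ T i' = j).card * (N * (N - 1))
      = ∑ p ∈ (Finset.univ : Finset (Fin N)).offDiag,
          ((assignments N Nj).filter fun T => T p.1 = j ∧ T p.2 = j).card := by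
        rw [Finset.sum_congr rfl fun p hp =>
          (card_filter_pair_eq Nj j (Finset.mem_offDiag.1 hp).2.2 h)]
        rw [Finset.sum_const, smul_eq_mul, Finset.offDiag_card, Finset.card_univ,
          Fintype.card_fin, nat_sq_sub, mul_comm]
    _ = ∑ p ∈ (Finset.univ : Finset (Fin N)).offDiag, ∑ T ∈ assignments N Nj,
          if T p.1 = j ∧ T p.2 = j then 1 else 0 :=
        Finset.sum_congr rfl fun _ _ => Finset.card_filter _ _
    _ = ∑ T ∈ assignments N Nj, ∑ p ∈ (Finset.univ : Finset (Fin N)).offDiag,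
          if T p.1 = j ∧ T p.2 = j then 1 else 0 := Finset.sum_comm
    _ = ∑ T ∈ assignments N Nj, Nj j * (Nj j - 1) := by
        refine Finset.sum_congr rfl fun T hT => ?_
        rw [← Finset.card_filter]
        have hset : ((Finset.univ : Finset (Fin N)).offDiag.filter
            fun p => T p.1 = j ∧ T p.2 = j)
            = (Finset.univ.filter fun i => T i = j).offDiag := by
          ext p
          simp only [Finset.mem_filter, Finset.mem_offDiag, Finset.mem_univ, true_and]
          tauto
        rw [hset, Finset.offDiag_card, (mem_assignments Nj).1 hT j, nat_sq_sub]
    _ = Nj j * (Nj j - 1) * (assignments N Nj).card := by simp [mul_comm]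

end Aux

/-- Unbiasedness of the sample variance under complete randomization: for every treatment
`j` with `N_j ≥ 2`, `E[s_j²] = S_j²`. -/
theorem expect_s2obs_eq_S2 {N J : ℕ} (hN : 2 ≤ N)
    (Y : Fin N → Fin J → ℝ) (Nj : Fin J → ℕ)
    (hpos : ∀ j, 1 ≤ Nj j) (hsum : ∑ j, Nj j = N) :
    ∀ j, 2 ≤ Nj j → expect Nj (s2obs Y Nj j) = S2 Y j := by
  intro j hj
  classical
  have hne : (assignments N Nj).Nonempty := assignments_nonempty Nj hsum
  have hnN : Nj j ≤ N := by
    rw [← hsum]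
    exact Finset.single_le_sum (f := Nj) (fun _ _ => Nat.zero_le _) (Finset.mem_univ j)
  have hcpos : (0 : ℝ) < ((assignments N Nj).card : ℝ) := by
    exact_mod_cast Finset.card_pos.2 hne
  have hc0 : ((assignments N Nj).card : ℝ) ≠ 0 := ne_of_gt hcpos
  have hN2 : (2 : ℝ) ≤ (N : ℝ) := by exact_mod_cast hN
  have hn2 : (2 : ℝ) ≤ (Nj j : ℝ) := by exact_mod_cast hj
  have hN0 : (N : ℝ) ≠ 0 := by linarith
  have hN1 : (N : ℝ) - 1 ≠ 0 := by linarith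
  have hn0 : (Nj j : ℝ) ≠ 0 := by linarith
  have hn1 : (Nj j : ℝ) - 1 ≠ 0 := by linarith
  have hN1n : (1 : ℕ) ≤ N := le_trans one_le_two hN
  have hn1n : (1 : ℕ) ≤ Nj j := hpos j
  -- single-index count
  have q1 : ∀ i : Fin N, (((assignments N Nj).filter fun T => T i = j).card : ℝ)
      = (Nj j : ℝ) * ((assignments N Nj).card : ℝ) / (N : ℝ) := by
    intro i
    rw [eq_div_iff hN0]
    exact_mod_cast card_filter_apply_mul Nj j i
  -- pair count
  have q2 : ∀ i i' : Fin N, i ≠ i' →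
      (((assignments N Nj).filter fun T => T i = j ∧ T i' = j).card : ℝ)
      = (Nj j : ℝ) * ((Nj j : ℝ) - 1) * ((assignments N Nj).card : ℝ)
          / ((N : ℝ) * ((N : ℝ) - 1)) := by
    intro i i' h
    rw [eq_div_iff (by intro hc; rcases mul_eq_zero.1 hc with h' | h' <;> [exact hN0 h'; exact hN1 h'])]
    have hnat := card_filter_pair_mul Nj j h
    have := congrArg (Nat.cast : ℕ → ℝ) hnat
    push_cast [Nat.cast_sub hN1n, Nat.cast_sub hn1n] at this
    linarith [this]
  -- rewrite s2obs on assignments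
  have hs2 : ∀ T ∈ assignments N Nj, s2obs Y Nj j T
      = ((∑ i ∈ Finset.univ.filter fun i => T i = j, (Y i j) ^ 2)
          - (∑ i ∈ Finset.univ.filter fun i => T i = j, Y i j) ^ 2 / (Nj j : ℝ))
        / ((Nj j : ℝ) - 1) := by
    intro T hT
    have hcard := (mem_assignments Nj).1 hT j
    simp only [s2obs, pObs]
    congr 1
    have hexp : ∀ i ∈ Finset.univ.filter fun i => T i = j,
        (Y i j - (∑ i ∈ Finset.univ.filter fun i => T i = j, Y i j) / (Nj j : ℝ)) ^ 2
        = (Y i j) ^ 2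
          - 2 * ((∑ i ∈ Finset.univ.filter fun i => T i = j, Y i j) / (Nj j : ℝ)) * Y i j
          + ((∑ i ∈ Finset.univ.filter fun i => T i = j, Y i j) / (Nj j : ℝ)) ^ 2 :=
      fun i _ => by ring
    rw [Finset.sum_congr rfl hexp, Finset.sum_add_distrib, Finset.sum_sub_distrib,
      ← Finset.mul_sum, Finset.sum_const, hcard, nsmul_eq_mul]
    field_simp
    ring
  have hsumA : ∑ T ∈ assignments N Nj, s2obs Y Nj j T
      = ((∑ T ∈ assignments N Nj,
            ∑ i ∈ Finset.univ.filter fun i => T i = j, (Y i j) ^ 2)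
          - (∑ T ∈ assignments N Nj,
              (∑ i ∈ Finset.univ.filter fun i => T i = j, Y i j) ^ 2) / (Nj j : ℝ))
        / ((Nj j : ℝ) - 1) := by
    rw [Finset.sum_congr rfl hs2, ← Finset.sum_div, Finset.sum_sub_distrib, ← Finset.sum_div]
  -- first moment sum
  have hQ : ∑ T ∈ assignments N Nj,
        ∑ i ∈ Finset.univ.filter fun i => T i = j, (Y i j) ^ 2
      = (Nj j : ℝ) * ((assignments N Nj).card : ℝ) / (N : ℝ) * ∑ i, (Y i j) ^ 2 := by
    calc ∑ T ∈ assignments N Nj, ∑ i ∈ Finset.univ.filter fun i => T i = j, (Y i j) ^ 2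
        = ∑ T ∈ assignments N Nj, ∑ i : Fin N, if T i = j then (Y i j) ^ 2 else 0 :=
          Finset.sum_congr rfl fun T _ => Finset.sum_filter _ _
      _ = ∑ i : Fin N, ∑ T ∈ assignments N Nj, if T i = j then (Y i j) ^ 2 else 0 :=
          Finset.sum_comm
      _ = ∑ i : Fin N, (((assignments N Nj).filter fun T => T i = j).card : ℝ) * (Y i j) ^ 2 := by
          refine Finset.sum_congr rfl fun i _ => ?_
          rw [← Finset.sum_filter, Finset.sum_const, nsmul_eq_mul]
      _ = ∑ i : Fin N, (Nj j : ℝ) * ((assignments N Nj).card : ℝ) / (N : ℝ) * (Y i j) ^ 2 := by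
          refine Finset.sum_congr rfl fun i _ => ?_
          rw [q1 i]
      _ = (Nj j : ℝ) * ((assignments N Nj).card : ℝ) / (N : ℝ) * ∑ i, (Y i j) ^ 2 := by
          rw [Finset.mul_sum]
  -- second moment sum
  have hS2 : ∑ T ∈ assignments N Nj,
        (∑ i ∈ Finset.univ.filter fun i => T i = j, Y i j) ^ 2
      = (Nj j : ℝ) * ((assignments N Nj).card : ℝ) / (N : ℝ) * ∑ i, (Y i j) ^ 2
        + (Nj j : ℝ) * ((Nj j : ℝ) - 1) * ((assignments N Nj).card : ℝ)
            / ((N : ℝ) * ((N : ℝ) - 1))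
          * ((∑ i, Y i j) ^ 2 - ∑ i, (Y i j) ^ 2) := by
    have key : ∀ T : Fin N → Fin J,
        (∑ i ∈ Finset.univ.filter fun i => T i = j, Y i j) ^ 2
        = ∑ i : Fin N, ∑ k : Fin N,
            if T i = j ∧ T k = j then Y i j * Y k j else 0 := by
      intro T
      rw [Finset.sum_filter, sq, Finset.sum_mul_sum]
      refine Finset.sum_congr rfl fun i _ => Finset.sum_congr rfl fun k _ => ?_
      by_cases h1 : T i = j <;> by_cases h2 : T k = j <;> simp [h1, h2]
    calc ∑ T ∈ assignments N Nj,
          (∑ i ∈ Finset.univ.filter fun i => T i = j, Y i j) ^ 2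
        = ∑ i : Fin N, ∑ k : Fin N, ∑ T ∈ assignments N Nj,
            if T i = j ∧ T k = j then Y i j * Y k j else 0 := by
          rw [Finset.sum_congr rfl fun T _ => key T, Finset.sum_comm]
          exact Finset.sum_congr rfl fun i _ => Finset.sum_comm
      _ = ∑ i : Fin N, ∑ k : Fin N,
            (((assignments N Nj).filter fun T => T i = j ∧ T k = j).card : ℝ)
              * (Y i j * Y k j) := by
          refine Finset.sum_congr rfl fun i _ => Finset.sum_congr rfl fun k _ => ?_
          rw [← Finset.sum_filter, Finset.sum_const, nsmul_eq_mul]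
      _ = ∑ i : Fin N,
            ((Nj j : ℝ) * ((assignments N Nj).card : ℝ) / (N : ℝ) * (Y i j) ^ 2
              + (Nj j : ℝ) * ((Nj j : ℝ) - 1) * ((assignments N Nj).card : ℝ)
                  / ((N : ℝ) * ((N : ℝ) - 1))
                * (Y i j * (∑ k, Y k j) - (Y i j) ^ 2)) := by
          refine Finset.sum_congr rfl fun i _ => ?_
          rw [← Finset.add_sum_erase _ _ (Finset.mem_univ i)]
          have hdiag : (((assignments N Nj).filter fun T => T i = j ∧ T i = j).card : ℝ)
              = (Nj j : ℝ) * ((assignments N Nj).card : ℝ) / (N : ℝ) := by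
            rw [← q1 i]
            congr 1
            simp [and_self]
          rw [hdiag]
          have hoff : ∀ k ∈ Finset.univ.erase i,
              (((assignments N Nj).filter fun T => T i = j ∧ T k = j).card : ℝ)
                * (Y i j * Y k j)
              = (Nj j : ℝ) * ((Nj j : ℝ) - 1) * ((assignments N Nj).card : ℝ)
                  / ((N : ℝ) * ((N : ℝ) - 1)) * (Y i j * Y k j) := by
            intro k hk
            rw [q2 i k (Ne.symm (Finset.mem_erase.1 hk).1)]
          rw [Finset.sum_congr rfl hoff, ← Finset.mul_sum, ← Finset.mul_sum,
            Finset.sum_erase_eq_sub (Finset.mem_univ i)]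
          ring
      _ = (Nj j : ℝ) * ((assignments N Nj).card : ℝ) / (N : ℝ) * ∑ i, (Y i j) ^ 2
            + (Nj j : ℝ) * ((Nj j : ℝ) - 1) * ((assignments N Nj).card : ℝ)
                / ((N : ℝ) * ((N : ℝ) - 1))
              * ((∑ i, Y i j) ^ 2 - ∑ i, (Y i j) ^ 2) := by
          rw [Finset.sum_add_distrib, ← Finset.mul_sum, ← Finset.mul_sum]
          congr 1
          congr 1
          rw [Finset.sum_sub_distrib, ← Finset.sum_mul, sq]
  -- population variance in raw form
  have hpop : S2 Y j = ((∑ i, (Y i j) ^ 2) - (∑ i, Y i j) ^ 2 / (N : ℝ)) / ((N : ℝ) - 1) := by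
    simp only [S2, Pmean]
    congr 1
    have hexp : ∀ i ∈ (Finset.univ : Finset (Fin N)),
        (Y i j - (∑ k, Y k j) / (N : ℝ)) ^ 2
        = (Y i j) ^ 2 - 2 * ((∑ k, Y k j) / (N : ℝ)) * Y i j
          + ((∑ k, Y k j) / (N : ℝ)) ^ 2 := fun i _ => by ring
    rw [Finset.sum_congr rfl hexp, Finset.sum_add_distrib, Finset.sum_sub_distrib,
      ← Finset.mul_sum, Finset.sum_const, Finset.card_univ, Fintype.card_fin, nsmul_eq_mul]
    field_simp
    ring
  -- conclude
  simp only [_root_.expect]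
  rw [hsumA, hQ, hS2, hpop]
  field_simp
  ring
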